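/- Let ε = min_{i,g} v_i(g) > 0 and suppose m ≥ n ≥ 2. If there exist agents i ≠ j with e_j > (1/ε)·(v_j(G) − (m−1)ε)·(v_i(G) − ε + e_i), then for any allocation A and any good g ∈ A_j, moving g from A_j to A_i strictly increases Nash welfare; consequently no Nash-welfare-maximizing allocation gives agent j any good, while the centralized solution (maximizing ∑_i log v_i(A_i)) gives every agent at least one good, hence the centralized solution does not maximize Nash welfare. -/

import Mathlib

open Finset

def bundleVal {n m : ℕ} (v : Fin n → Fin m → ℝ) (A : Fin m → Fin n) (i : Fin n) : ℝ :=
  ∑ g ∈ Finset.univ.filter (fun g => A g = i), v i g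

noncomputable def NW {n m : ℕ} (v : Fin n → Fin m → ℝ) (e : Fin n → ℝ)
    (A : Fin m → Fin n) : ℝ :=
  ∑ i, Real.log (bundleVal v A i + e i)

theorem stmt6 (n m : ℕ) (hn : 2 ≤ n) (hm : n ≤ m)
    (v : Fin n → Fin m → ℝ) (e : Fin n → ℝ) (he : ∀ i, 0 < e i)
    (ε : ℝ) (hε : 0 < ε)
    (hεmin : IsLeast (Set.range fun p : Fin n × Fin m => v p.1 p.2) ε)
    (i j : Fin n) (hij : i ≠ j)
    (hgap : e j > (1 / ε) * ((∑ g, v j g) - ((m : ℝ) - 1) * ε)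
        * ((∑ g, v i g) - ε + e i)) :
    -- moving any good from j's bundle to i's bundle strictly increases Nash welfare
    (∀ (A : Fin m → Fin n) (g : Fin m), A g = j →
        NW v e A < NW v e (Function.update A g i)) ∧
    -- no Nash-welfare-maximizing allocation gives agent j any good
    (∀ A : Fin m → Fin n, (∀ B, NW v e B ≤ NW v e A) → ∀ g, A g ≠ j) ∧
    -- the centralized solution (which, since `m ≥ n` and all values are positive,
    -- gives every agent at least one good) does not maximize Nash welfare
    (∀ ACEN : Fin m → Fin n,
        (∀ i' : Fin n, ∃ g, ACEN g = i') →
        (∀ A : Fin m → Fin n, (∀ i' : Fin n, ∃ g, A g = i') →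
            ∑ i', Real.log (bundleVal v A i')
              ≤ ∑ i', Real.log (bundleVal v ACEN i')) →
        ¬ (∀ A : Fin m → Fin n, NW v e A ≤ NW v e ACEN)) := by
  have hεle : ∀ (k : Fin n) (g : Fin m), ε ≤ v k g := fun k g => hεmin.2 ⟨(k, g), rfl⟩
  have hm1 : 1 ≤ m := le_trans (le_trans one_le_two hn) hm
  have key : ∀ (A : Fin m → Fin n) (g : Fin m), A g = j →
      NW v e A < NW v e (Function.update A g i) := by
    intro A g hg
    set B := Function.update A g i with hB
    set ai := bundleVal v A i with hai
    set aj := bundleVal v A j with haj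
    set Vi := ∑ g, v i g with hVi
    set Vj := ∑ g, v j g with hVj
    -- bundle identities
    have hgnotin : g ∉ Finset.univ.filter (fun g' => A g' = i) := by
      simp [hg, hij.symm]
    have hfi : Finset.univ.filter (fun g' => B g' = i)
        = insert g (Finset.univ.filter (fun g' => A g' = i)) := by
      ext g'; by_cases h : g' = g <;> simp [hB, Function.update_apply, h, hij.symm]
    have hgin : g ∈ Finset.univ.filter (fun g' => A g' = j) := by simp [hg]
    have hfj : Finset.univ.filter (fun g' => B g' = j)
        = (Finset.univ.filter (fun g' => A g' = j)).erase g := by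
      ext g'; by_cases h : g' = g <;> simp [hB, Function.update_apply, h, hij]
    have hBi : bundleVal v B i = ai + v i g := by
      rw [bundleVal, hfi, Finset.sum_insert hgnotin, hai, bundleVal]; ring
    have hBj : bundleVal v B j = aj - v j g := by
      rw [bundleVal, hfj, Finset.sum_erase_eq_sub hgin, haj, bundleVal]
    have hBk : ∀ k : Fin n, k ≠ i → k ≠ j → bundleVal v B k = bundleVal v A k := by
      intro k hki hkj
      unfold bundleVal
      refine Finset.sum_congr ?_ (fun _ _ => rfl)
      ext g'; by_cases h : g' = g <;>
        simp [hB, Function.update_apply, h, hg, Ne.symm hki, Ne.symm hkj]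
    -- basic bounds
    have hnn : ∀ (k : Fin n) (s : Finset (Fin m)), 0 ≤ ∑ g' ∈ s, v k g' :=
      fun k s => Finset.sum_nonneg fun g' _ => le_trans hε.le (hεle k g')
    have hai0 : 0 ≤ ai := hnn i _
    have haj1 : v j g ≤ aj := Finset.single_le_sum
      (fun g' _ => le_trans hε.le (hεle j g')) hgin
    have haiV : ai + v i g ≤ Vi := by
      have := Finset.sum_le_sum_of_subset_of_nonneg
        (Finset.subset_univ (insert g (Finset.univ.filter (fun g' => A g' = i))))
        (fun g' _ _ => le_trans hε.le (hεle i g'))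
      rw [Finset.sum_insert hgnotin] at this
      rw [hai, bundleVal, hVi]; linarith
    have hvjV : v j g ≤ Vj - ((m : ℝ) - 1) * ε := by
      have hcard : ((Finset.univ.erase g).card : ℝ) = (m : ℝ) - 1 := by
        rw [Finset.card_erase_of_mem (Finset.mem_univ g)]
        simp [Nat.cast_sub hm1]
      have hsum : ((m : ℝ) - 1) * ε ≤ ∑ g' ∈ Finset.univ.erase g, v j g' := by
        calc ((m : ℝ) - 1) * ε = ((Finset.univ.erase g).card : ℝ) * ε := by rw [hcard]
          _ ≤ ∑ g' ∈ Finset.univ.erase g, v j g' := by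
              rw [← nsmul_eq_mul]
              exact Finset.card_nsmul_le_sum _ _ _ (fun g' _ => hεle j g')
      have : Vj = v j g + ∑ g' ∈ Finset.univ.erase g, v j g' := by
        rw [hVj, ← Finset.add_sum_erase _ _ (Finset.mem_univ g)]
      linarith
    set x := ai + e i with hxdef
    set y := aj + e j with hydef
    have hx : 0 < x := by have h1 := he i; rw [hxdef]; linarith
    have hy : 0 < y := by have h1 := he j; have h2 := hεle j g; rw [hydef]; linarith
    have hxle : x ≤ Vi - ε + e i := by have h1 := hεle i g; rw [hxdef]; linarith
    have hyvj : 0 < y - v j g := by have h1 := he j; rw [hydef]; linarith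
    have hxvi : 0 < x + v i g := by have h1 := hεle i g; linarith
    -- product inequality
    have hprod : x * y < (x + v i g) * (y - v j g) := by
      have hvjx : v j g * x ≤ (Vj - ((m : ℝ) - 1) * ε) * (Vi - ε + e i) :=
        mul_le_mul hvjV hxle hx.le (by have := hεle j g; linarith)
      have hεej : (Vj - ((m : ℝ) - 1) * ε) * (Vi - ε + e i) < ε * e j := by
        have h1 : ε * ((1 / ε) * (Vj - ((m : ℝ) - 1) * ε) * (Vi - ε + e i))
            < ε * e j := mul_lt_mul_of_pos_left hgap hε
        have h2 : ε * ((1 / ε) * (Vj - ((m : ℝ) - 1) * ε) * (Vi - ε + e i))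
            = (Vj - ((m : ℝ) - 1) * ε) * (Vi - ε + e i) := by
          field_simp
        linarith
      have hviy : ε * e j ≤ v i g * (y - v j g) := by
        have h1 : ε * e j ≤ ε * (y - v j g) := by
          have : e j ≤ y - v j g := by linarith
          exact mul_le_mul_of_nonneg_left this hε.le
        have h2 : ε * (y - v j g) ≤ v i g * (y - v j g) :=
          mul_le_mul_of_nonneg_right (hεle i g) hyvj.le
        linarith
      nlinarith [hvjx, hεej, hviy]
    -- log inequality
    have hlog : Real.log x + Real.log y
        < Real.log (x + v i g) + Real.log (y - v j g) := by
      have := Real.log_lt_log (mul_pos hx hy) hprod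
      rwa [Real.log_mul hx.ne' hy.ne', Real.log_mul hxvi.ne' hyvj.ne'] at this
    -- assemble
    have hsub : NW v e B - NW v e A
        = ∑ k, (Real.log (bundleVal v B k + e k) - Real.log (bundleVal v A k + e k)) := by
      rw [NW, NW, Finset.sum_sub_distrib]
    have hzero : ∀ k ∈ (Finset.univ : Finset (Fin n)), k ∉ ({i, j} : Finset (Fin n)) →
        Real.log (bundleVal v B k + e k) - Real.log (bundleVal v A k + e k) = 0 := by
      intro k _ hk
      simp only [Finset.mem_insert, Finset.mem_singleton, not_or] at hk
      rw [hBk k hk.1 hk.2]; ring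
    have hsum2 : NW v e B - NW v e A
        = ∑ k ∈ ({i, j} : Finset (Fin n)),
            (Real.log (bundleVal v B k + e k) - Real.log (bundleVal v A k + e k)) := by
      rw [hsub, ← Finset.sum_subset (Finset.subset_univ _) hzero]
    rw [Finset.sum_pair hij] at hsum2
    rw [hBi, hBj] at hsum2
    have : 0 < NW v e B - NW v e A := by
      rw [hsum2]
      have hax : ai + v i g + e i = x + v i g := by rw [hxdef]; ring
      have hay : aj - v j g + e j = y - v j g := by rw [hydef]; ring
      rw [hax, hay]
      linarith
    linarith
  refine ⟨key, ?_, ?_⟩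
  · intro A hmax g hAg
    exact absurd (hmax (Function.update A g i)) (not_le.2 (key A g hAg))
  · intro ACEN hcov _ hmax
    obtain ⟨g, hg⟩ := hcov j
    exact absurd (hmax (Function.update ACEN g i)) (not_le.2 (key ACEN g hg))
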